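/- For any vector Y = (Y1, Y2, Y3) ∈ R^9 with Y1, Y2, Y3 ∈ R^3, unit vectors a, b ∈ R^3, and α > 0, one has |−αY1 + a×Y3|² + |−αY2 + b×Y3|² + |a×Y1 + b×Y2|² ≤ max(2+2α², 3+α²)(|Y1|²+|Y2|²+|Y3|²). -/

import Mathlib

noncomputable section

/-- The skew-symmetric cross-product matrix of `x ∈ ℝ³`. -/
def crossMat (x : EuclideanSpace ℝ (Fin 3)) : Matrix (Fin 3) (Fin 3) ℝ :=
  !![0, -x 2, x 1; x 2, 0, -x 0; -x 1, x 0, 0]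

/-- The cross product on `ℝ³` (Euclidean space). -/
def cross (x y : EuclideanSpace ℝ (Fin 3)) : EuclideanSpace ℝ (Fin 3) :=
  WithLp.toLp 2 ![x 1 * y 2 - x 2 * y 1, x 2 * y 0 - x 0 * y 2, x 0 * y 1 - x 1 * y 0]

lemma norm_sq_eq (v : EuclideanSpace ℝ (Fin 3)) :
    ‖v‖ ^ 2 = v 0 ^ 2 + v 1 ^ 2 + v 2 ^ 2 := by
  rw [EuclideanSpace.norm_eq]
  rw [Real.sq_sqrt (by positivity)]
  simp [Fin.sum_univ_three, sq_abs]

lemma cross_norm_le (a x : EuclideanSpace ℝ (Fin 3)) (ha : ‖a‖ = 1) :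
    ‖cross a x‖ ≤ ‖x‖ := by
  have h1 : ‖a‖ ^ 2 = 1 := by rw [ha]; norm_num
  rw [norm_sq_eq] at h1
  have h2 : ‖cross a x‖ ^ 2 ≤ ‖x‖ ^ 2 := by
    rw [norm_sq_eq, norm_sq_eq]
    show (a 1 * x 2 - a 2 * x 1) ^ 2 + (a 2 * x 0 - a 0 * x 2) ^ 2 +
      (a 0 * x 1 - a 1 * x 0) ^ 2 ≤ _
    nlinarith [sq_nonneg (a 0 * x 0 + a 1 * x 1 + a 2 * x 2), sq_nonneg (x 0),
      sq_nonneg (x 1), sq_nonneg (x 2)]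
  nlinarith [h2, norm_nonneg (cross a x), norm_nonneg x]

theorem stmt_4 (Y1 Y2 Y3 : EuclideanSpace ℝ (Fin 3)) (a b : EuclideanSpace ℝ (Fin 3))
    (ha : ‖a‖ = 1) (hb : ‖b‖ = 1) (α : ℝ) (hα : 0 < α) :
    ‖-(α • Y1) + cross a Y3‖ ^ 2 + ‖-(α • Y2) + cross b Y3‖ ^ 2 +
      ‖cross a Y1 + cross b Y2‖ ^ 2 ≤
    max (2 + 2 * α ^ 2) (3 + α ^ 2) * (‖Y1‖ ^ 2 + ‖Y2‖ ^ 2 + ‖Y3‖ ^ 2) := by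
  set x := ‖Y1‖ with hx
  set y := ‖Y2‖ with hy
  set z := ‖Y3‖ with hz
  have hx0 : 0 ≤ x := norm_nonneg _
  have hy0 : 0 ≤ y := norm_nonneg _
  have hz0 : 0 ≤ z := norm_nonneg _
  have h1 : ‖-(α • Y1) + cross a Y3‖ ≤ α * x + z := by
    refine (norm_add_le _ _).trans ?_
    rw [norm_neg, norm_smul, Real.norm_eq_abs, abs_of_pos hα]
    gcongr
    exact cross_norm_le a Y3 ha
  have h2 : ‖-(α • Y2) + cross b Y3‖ ≤ α * y + z := by
    refine (norm_add_le _ _).trans ?_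
    rw [norm_neg, norm_smul, Real.norm_eq_abs, abs_of_pos hα]
    gcongr
    exact cross_norm_le b Y3 hb
  have h3 : ‖cross a Y1 + cross b Y2‖ ≤ x + y := by
    refine (norm_add_le _ _).trans ?_
    gcongr
    · exact cross_norm_le a Y1 ha
    · exact cross_norm_le b Y2 hb
  have hq1 : ‖-(α • Y1) + cross a Y3‖ ^ 2 ≤ (α * x + z) ^ 2 :=
    pow_le_pow_left₀ (norm_nonneg _) h1 2
  have hq2 : ‖-(α • Y2) + cross b Y3‖ ^ 2 ≤ (α * y + z) ^ 2 :=
    pow_le_pow_left₀ (norm_nonneg _) h2 2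
  have hq3 : ‖cross a Y1 + cross b Y2‖ ^ 2 ≤ (x + y) ^ 2 :=
    pow_le_pow_left₀ (norm_nonneg _) h3 2
  have key : (α * x + z) ^ 2 + (α * y + z) ^ 2 + (x + y) ^ 2 ≤
      max (2 + 2 * α ^ 2) (3 + α ^ 2) * (x ^ 2 + y ^ 2 + z ^ 2) := by
    rcases le_total (α ^ 2) 1 with hα1 | hα1
    · have hmax : max (2 + 2 * α ^ 2) (3 + α ^ 2) = 3 + α ^ 2 := by
        apply max_eq_right; nlinarith
      rw [hmax]
      nlinarith [sq_nonneg (x - y), sq_nonneg (x - α * z), sq_nonneg (y - α * z),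
        mul_nonneg (mul_nonneg hx0 hy0) hz0, sq_nonneg z]
    · have hmax : max (2 + 2 * α ^ 2) (3 + α ^ 2) = 2 + 2 * α ^ 2 := by
        apply max_eq_left; nlinarith
      rw [hmax]
      nlinarith [sq_nonneg (x - y), sq_nonneg (α * x - z), sq_nonneg (α * y - z),
        sq_nonneg z, sq_nonneg x, sq_nonneg y]
  linarith
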